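/- For z, ζ in the open upper half-plane with |ζ| > 2|z| and |ζ| > 1, the modified Green function satisfies |G_m(z,ζ)| ≤ (1/π) ∑_{k=m+1}^{∞} k y η |z|^{k-1} / |ζ|^{1+k}, where y = Im z and η = Im ζ; in particular the series on the right converges. -/

import Mathlib

open Complex in
lemma im_pow_le (z : ℂ) (n : ℕ) :
    |(z ^ (n + 1)).im| ≤ (n + 1) * |z.im| * ‖z‖ ^ n := by
  induction n with
  | zero => simp
  | succ n ih =>
    have h1 : z ^ (n + 2) = z * z ^ (n + 1) := by ring
    have h2 : |(z ^ (n + 1)).re| ≤ ‖z‖ ^ (n + 1) := by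
      calc |(z ^ (n + 1)).re| ≤ ‖z ^ (n + 1)‖ := Complex.abs_re_le_norm _
        _ = ‖z‖ ^ (n + 1) := by rw [norm_pow]
    rw [h1, Complex.mul_im]
    push_cast
    calc |z.re * (z ^ (n + 1)).im + z.im * (z ^ (n + 1)).re|
        ≤ |z.re| * |(z ^ (n + 1)).im| + |z.im| * |(z ^ (n + 1)).re| := by
          refine (abs_add_le _ _).trans ?_
          rw [abs_mul, abs_mul]
      _ ≤ ‖z‖ * ((n + 1) * |z.im| * ‖z‖ ^ n)
            + |z.im| * ‖z‖ ^ (n + 1) := by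
          gcongr
          exact Complex.abs_re_le_norm z
      _ = (n + 1 + 1) * |z.im| * ‖z‖ ^ (n + 1) := by ring


lemma re_div_sub_conj (u v : ℂ) :
    (u / v - u / (starRingEnd ℂ v)).re = 2 * u.im * v.im / ‖v‖ ^ 2 := by
  rw [Complex.sq_norm]
  simp only [Complex.sub_re, Complex.div_re, Complex.normSq_conj, Complex.conj_re,
    Complex.conj_im, Complex.normSq_apply]
  ring


/-- The modified kernel `E_{m+1}` evaluated at `z - ζ` (its correction term depends on `ζ`). -/
noncomputable def Em1 (m : ℕ) (z ζ : ℂ) : ℝ :=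
  1 / (2 * Real.pi) * Real.log (‖z - ζ‖) -
    (if 1 < ‖ζ‖ then
      1 / (2 * Real.pi) *
        (Complex.log ζ - ∑ k ∈ Finset.Icc 1 m, z ^ k / (k * ζ ^ k)).re
    else 0)

lemma Em1_eq (m : ℕ) (z ζ : ℂ) (h1 : 1 < ‖ζ‖)
    (hlt : ‖z‖ < ‖ζ‖) :
    Em1 m z ζ =
      -(1 / (2 * Real.pi)) *
        ∑' j : ℕ, ((z / ζ) ^ (j + m + 1) / ((j + m + 1 : ℕ) : ℂ)).re := by
  have hζ0 : ζ ≠ 0 := by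
    intro h; rw [h] at h1; simp at h1; linarith
  set w : ℂ := z / ζ with hw
  have hwn : ‖w‖ < 1 := by
    rw [hw]
    simp only [norm_div]
    rw [div_lt_one (by positivity)]
    exact hlt
  have hne : z ≠ ζ := by
    intro h; rw [h] at hlt; exact lt_irrefl _ hlt
  have h1w : (1 : ℂ) - w ≠ 0 := by
    intro h
    have : w = 1 := by linear_combination -h
    rw [this] at hwn; simp at hwn
  have H := Complex.hasSum_taylorSeries_neg_log hwn
  have Hre := Complex.hasSum_re H
  have hsplit := Summable.sum_add_tsum_nat_add (m + 1) Hre.summable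
  -- log of abs decomposition
  have hzζ : z - ζ = -ζ * (1 - w) := by
    field_simp [hw]
    rw [mul_sub, mul_one, mul_comm ζ, div_mul_cancel₀ z hζ0]; ring
  have habs : ‖z - ζ‖ = ‖ζ‖ * ‖1 - w‖ := by
    rw [hzζ, norm_mul, norm_neg]
  have hlog : Real.log (‖z - ζ‖) =
      Real.log (‖ζ‖) + (Complex.log (1 - w)).re := by
    rw [habs, Real.log_mul (by positivity) (norm_ne_zero_iff.mpr h1w), Complex.log_re]
  -- the finite sum identity
  have hfin : ∑ i ∈ Finset.range (m + 1), (w ^ i / (i : ℂ)).re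
      = (∑ k ∈ Finset.Icc 1 m, z ^ k / (k * ζ ^ k)).re := by
    rw [Complex.re_sum, Finset.sum_range_succ']
    have : ∑ k ∈ Finset.Icc 1 m, (z ^ k / (k * ζ ^ k)).re
        = ∑ i ∈ Finset.range m, (z ^ (1 + i) / ((1 + i : ℕ) * ζ ^ (1 + i))).re := by
      rw [← Finset.Ico_add_one_right_eq_Icc, Finset.sum_Ico_eq_sum_range, Nat.add_sub_cancel]
    rw [this]
    simp only [pow_zero, Nat.cast_zero, div_zero, Complex.zero_re, add_zero]
    apply Finset.sum_congr rfl
    intro i _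
    congr 1
    rw [hw]
    have h1i : ((1 + i : ℕ) : ℂ) = ((i : ℂ) + 1) := by push_cast; ring
    rw [show i + 1 = 1 + i by ring, h1i]
    field_simp
    rw [div_pow, div_mul_cancel₀ _ (pow_ne_zero _ hζ0)]
  -- combine
  have hlog1w : (Complex.log (1 - w)).re =
      -(∑ i ∈ Finset.range (m + 1), (w ^ i / (i : ℂ)).re
        + ∑' j : ℕ, (w ^ (j + (m + 1)) / ((j + (m + 1) : ℕ) : ℂ)).re) := by
    rw [hsplit, Hre.tsum_eq, Complex.neg_re, neg_neg]
  have hζre : (Complex.log ζ).re = Real.log (‖ζ‖) := Complex.log_re ζ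
  rw [Em1, if_pos h1, hlog, Complex.sub_re, hζre, ← hfin]
  have : ∑' j : ℕ, ((z / ζ) ^ (j + m + 1) / ((j + m + 1 : ℕ) : ℂ)).re
      = ∑' j : ℕ, (w ^ (j + (m + 1)) / ((j + (m + 1) : ℕ) : ℂ)).re := by
    apply tsum_congr; intro j
    rw [hw, show j + (m + 1) = j + m + 1 by ring]
  rw [this, hlog1w]
  ring


/-- The modified Green function `G_m(z,ζ) = E_{m+1}(z-ζ) - E_{m+1}(z-ζ̄)`. -/
noncomputable def Gm (m : ℕ) (z ζ : ℂ) : ℝ :=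
  Em1 m z ζ - Em1 m z (starRingEnd ℂ ζ)

lemma summable_tail (m : ℕ) {w : ℂ} (hw : ‖w‖ < 1) :
    Summable (fun j : ℕ => (w ^ (j + m + 1) / ((j + m + 1 : ℕ) : ℂ)).re) := by
  have h := (Complex.hasSum_re (Complex.hasSum_taylorSeries_neg_log hw)).summable
  have h2 := (summable_nat_add_iff
    (f := fun n : ℕ => (w ^ n / (n : ℂ)).re) (m + 1)).mpr h
  exact h2.congr fun j => by rw [← add_assoc]


theorem stmt7 (m : ℕ) (z ζ : ℂ) (hz : 0 < z.im) (hζ : 0 < ζ.im)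
    (h1 : 1 < ‖ζ‖) (h2 : 2 * ‖z‖ < ‖ζ‖) :
    Summable (fun k : ℕ =>
      ((k + m + 1 : ℕ) : ℝ) * z.im * ζ.im * ‖z‖ ^ (k + m) /
        ‖ζ‖ ^ (k + m + 2)) ∧
    |Gm m z ζ| ≤
      1 / Real.pi * ∑' k : ℕ,
        ((k + m + 1 : ℕ) : ℝ) * z.im * ζ.im * ‖z‖ ^ (k + m) /
          ‖ζ‖ ^ (k + m + 2) := by
  set r := ‖z‖ with hr
  set R := ‖ζ‖ with hR
  have hr0 : 0 ≤ r := norm_nonneg z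
  have hR0 : 0 < R := by linarith
  have hrR : r < R := by linarith
  set q : ℝ := r / R with hq
  have hq0 : 0 ≤ q := by positivity
  have hq1 : q < 1 := by rw [hq, div_lt_one hR0]; exact hrR
  set y := z.im
  set η := ζ.im
  set t : ℕ → ℝ := fun j =>
    ((j + m + 1 : ℕ) : ℝ) * y * η * r ^ (j + m) / R ^ (j + m + 2) with ht
  -- Summability of t
  have hg : Summable (fun n : ℕ => ((n : ℝ) + 1) * q ^ n) := by
    have h1s : Summable (fun n : ℕ => (n : ℝ) ^ 1 * q ^ n) :=
      summable_pow_mul_geometric_of_norm_lt_one 1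
        (by rwa [Real.norm_eq_abs, _root_.abs_of_nonneg hq0])
    have h2s : Summable (fun n : ℕ => q ^ n) := summable_geometric_of_lt_one hq0 hq1
    refine (h1s.add h2s).congr fun n => by push_cast; ring
  have hgm : Summable (fun j : ℕ => ((j + m : ℝ) + 1) * q ^ (j + m)) := by
    have := (summable_nat_add_iff (f := fun n : ℕ => ((n : ℝ) + 1) * q ^ n) m).mpr hg
    refine this.congr fun j => by push_cast; ring
  have hpowR : ∀ p : ℕ, R ^ (p + 2) = R ^ p * R ^ 2 := fun p => by ring
  have htsum : Summable t := by
    refine ((hgm.mul_left (y * η / R ^ 2)).congr fun j => ?_)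
    rw [ht]
    simp only
    rw [hq, div_pow, hpowR (j + m)]
    have hRp : R ^ (j + m) ≠ 0 := by positivity
    push_cast
    field_simp
  refine ⟨htsum, ?_⟩
  -- the series representation
  have habsconj : ‖starRingEnd ℂ ζ‖ = R := Complex.norm_conj ζ
  have hE1 := Em1_eq m z ζ h1 hrR
  have hE2 := Em1_eq m z (starRingEnd ℂ ζ) (by rwa [habsconj]) (by rwa [habsconj])
  have hw1 : ‖z / ζ‖ < 1 := by
    simp only [norm_div]
    rw [div_lt_one hR0]; exact hrR
  have hw2 : ‖z / starRingEnd ℂ ζ‖ < 1 := by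
    simp only [norm_div, habsconj]
    rw [div_lt_one hR0]; exact hrR
  set a : ℕ → ℝ := fun j => ((z / ζ) ^ (j + m + 1) / ((j + m + 1 : ℕ) : ℂ)).re with ha
  set b : ℕ → ℝ :=
    fun j => ((z / starRingEnd ℂ ζ) ^ (j + m + 1) / ((j + m + 1 : ℕ) : ℂ)).re with hb
  have hsa : Summable a := summable_tail m hw1
  have hsb : Summable b := summable_tail m hw2
  have hGm : Gm m z ζ = -(1 / (2 * Real.pi)) * ∑' j, (a j - b j) := by
    rw [Gm, hE1, hE2, Summable.tsum_sub hsa hsb]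
    ring
  -- pointwise bound
  have hbound : ∀ j : ℕ, |a j - b j| ≤ 2 * t j := by
    intro j
    have hk : a j - b j =
        2 * (z ^ (j + m + 1)).im * (ζ ^ (j + m + 1)).im
          / ‖ζ ^ (j + m + 1)‖ ^ 2 / ((j + m + 1 : ℕ) : ℝ) := by
      have e1 : (z / ζ) ^ (j + m + 1) / ((j + m + 1 : ℕ) : ℂ)
            - (z / starRingEnd ℂ ζ) ^ (j + m + 1) / ((j + m + 1 : ℕ) : ℂ)
          = (z ^ (j + m + 1) / ζ ^ (j + m + 1)
              - z ^ (j + m + 1) / (starRingEnd ℂ (ζ ^ (j + m + 1))))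
            / ((j + m + 1 : ℕ) : ℂ) := by
        rw [div_pow, div_pow, map_pow]
        ring
      rw [ha, hb]
      simp only
      rw [← Complex.sub_re, e1, Complex.div_natCast_re, re_div_sub_conj]
    rw [hk]
    have him1 : |(z ^ (j + m + 1)).im| ≤ ((j + m : ℕ) + 1) * y * r ^ (j + m) := by
      have := im_pow_le z (j + m)
      rwa [_root_.abs_of_pos hz] at this
    have him2 : |(ζ ^ (j + m + 1)).im| ≤ ((j + m : ℕ) + 1) * η * R ^ (j + m) := by
      have := im_pow_le ζ (j + m)
      rwa [_root_.abs_of_pos hζ] at this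
    have habspow : ‖ζ ^ (j + m + 1)‖ ^ 2
        = R ^ (j + m) * R ^ (j + m + 2) := by
      rw [norm_pow, ← pow_mul, ← pow_add]
      congr 1
      omega
    have hden : (0:ℝ) < R ^ (j + m) * R ^ (j + m + 2) := by positivity
    have hkpos : (0:ℝ) < ((j + m + 1 : ℕ) : ℝ) := by positivity
    calc |2 * (z ^ (j + m + 1)).im * (ζ ^ (j + m + 1)).im
            / ‖ζ ^ (j + m + 1)‖ ^ 2 / ((j + m + 1 : ℕ) : ℝ)|
        = 2 * |(z ^ (j + m + 1)).im| * |(ζ ^ (j + m + 1)).im|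
            / (R ^ (j + m) * R ^ (j + m + 2)) / ((j + m + 1 : ℕ) : ℝ) := by
          rw [habspow, abs_div, abs_div, abs_mul, abs_mul]
          rw [_root_.abs_of_pos hden, _root_.abs_of_pos hkpos, _root_.abs_two]
      _ ≤ 2 * (((j + m : ℕ) + 1) * y * r ^ (j + m)) * (((j + m : ℕ) + 1) * η * R ^ (j + m))
            / (R ^ (j + m) * R ^ (j + m + 2)) / ((j + m + 1 : ℕ) : ℝ) := by
          gcongr
      _ = 2 * t j := by
          rw [ht]
          simp only
          have hRp : R ^ (j + m) ≠ 0 := by positivity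
          have hRp2 : R ^ (j + m + 2) ≠ 0 := by positivity
          have hkne : ((j + m + 1 : ℕ) : ℝ) ≠ 0 := ne_of_gt hkpos
          push_cast
          field_simp
  -- conclude
  have hc : Summable (fun j => 2 * t j) := htsum.mul_left 2
  have hbig : |∑' j, (a j - b j)| ≤ ∑' j, 2 * t j := by
    have := tsum_of_norm_bounded hc.hasSum (fun j => by
      rw [Real.norm_eq_abs]; exact hbound j)
    simpa using this
  have hπ : 0 < Real.pi := Real.pi_pos
  rw [hGm, abs_mul, abs_neg, abs_of_pos (by positivity : (0:ℝ) < 1 / (2 * Real.pi))]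
  calc 1 / (2 * Real.pi) * |∑' j, (a j - b j)|
      ≤ 1 / (2 * Real.pi) * ∑' j, 2 * t j :=
        mul_le_mul_of_nonneg_left hbig (by positivity)
    _ = 1 / Real.pi * ∑' j, t j := by
        rw [tsum_mul_left]
        field_simp
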